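/- arXiv:2109.02698 — 2 statements merged into one kernel-verified Lean document; each statement's English description precedes it below -/
import Mathlib

section
/- Let p be a prime, r a positive integer, F a finite field with p^r elements, and m ≥ 2. Let D be an m×m matrix over F that is alternating, i.e., Dᵀ = −D and every diagonal entry of D is 0. Then A·D·Aᵀ = D for every A ∈ Up_m(F) if and only if there exists x ∈ F with D = x·(E_{1,2} − E_{2,1}) (i.e., all entries of D vanish except D_{1,2} = x and D_{2,1} = −x). -/
open Matrix

/-- `M` is an upper unitriangular matrix. -/
def IsUnitriangular {n : ℕ} {F : Type} [Field F]
    (M : Matrix (Fin n) (Fin n) F) : Prop :=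
  (∀ i, M i i = 1) ∧ ∀ i j : Fin n, j < i → M i j = 0

lemma stdBasisMatrix_transpose' {n : ℕ} {F : Type} [Field F] (i j : Fin n) (c : F) :
    (Matrix.single i j c)ᵀ = Matrix.single j i c := by
  ext a b
  simp [Matrix.single, and_comm]

lemma mul_std_mul {n : ℕ} {F : Type} [Field F] (A B : Matrix (Fin n) (Fin n) F)
    (i j k l : Fin n) :
    (A * (Matrix.single i j (1 : F)) * B) k l = A k i * B j l := by
  rw [Matrix.mul_assoc, Matrix.mul_apply]
  rw [Finset.sum_eq_single i]
  · rw [Matrix.single_mul_apply_same, one_mul]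
  · intro a _ ha
    rw [Matrix.single_mul_apply_of_ne (h := ha), mul_zero]
  · simp

/-- For `D` alternating (`Dᵀ = -D` with zero diagonal), `A * D * Aᵀ = D` for all
unitriangular `A` iff `D = x • (E_{1,2} - E_{2,1})` for some `x ∈ F`. -/
theorem alternating_fixed_by_unitriangular (p r m : ℕ) (hp : p.Prime) (hr : 0 < r)
    (hm : 2 ≤ m) (F : Type) [Field F] [Fintype F] (hF : Fintype.card F = p ^ r)
    (D : Matrix (Fin m) (Fin m) F) (hD : Dᵀ = -D) (hD0 : ∀ i, D i i = 0) :
    (∀ A : Matrix (Fin m) (Fin m) F, IsUnitriangular A → A * D * Aᵀ = D) ↔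
      ∃ x : F, D = x •
        (Matrix.single (⟨0, by omega⟩ : Fin m) (⟨1, by omega⟩ : Fin m) (1 : F) -
         Matrix.single (⟨1, by omega⟩ : Fin m) (⟨0, by omega⟩ : Fin m) (1 : F)) := by
  set e0 : Fin m := ⟨0, by omega⟩ with he0
  set e1 : Fin m := ⟨1, by omega⟩ with he1
  have he01 : e0 ≠ e1 := by simp [he0, he1, Fin.ext_iff]
  have hanti : ∀ a b : Fin m, D b a = -D a b := by
    intro a b
    have := congrFun (congrFun hD a) b
    simpa [Matrix.transpose_apply] using this
  constructor
  · intro H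
    -- key: for i < j and l ≠ i, D j l = 0
    have key : ∀ i j : Fin m, i < j → ∀ l : Fin m, l ≠ i → D j l = 0 := by
      intro i j hij l hl
      have hij' : i ≠ j := ne_of_lt hij
      set E : Matrix (Fin m) (Fin m) F := Matrix.single i j (1 : F) with hE
      set A : Matrix (Fin m) (Fin m) F := 1 + E with hA
      have hAu : IsUnitriangular A := by
        constructor
        · intro k
          have hk : E k k = 0 := by
            apply Matrix.single_apply_of_ne
            rintro ⟨rfl, rfl⟩; exact hij' rfl
          simp [hA, Matrix.one_apply, hk]
        · intro k l' hlk
          have h1 : (1 : Matrix (Fin m) (Fin m) F) k l' = 0 :=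
            Matrix.one_apply_ne (ne_of_gt hlk)
          have hk : E k l' = 0 := by
            apply Matrix.single_apply_of_ne
            rintro ⟨rfl, rfl⟩
            exact absurd hij (not_lt_of_gt hlk)
          simp [hA, h1, hk]
      have hEq := H A hAu
      have hexp : A * D * Aᵀ = D + (E * D + (D * Eᵀ + E * D * Eᵀ)) := by
        rw [hA, Matrix.transpose_add, Matrix.transpose_one]
        noncomm_ring
      rw [hexp] at hEq
      have hzero : E * D + (D * Eᵀ + E * D * Eᵀ) = 0 := by
        have := add_eq_left.mp hEq
        exact this
      have hent := congrFun (congrFun hzero i) l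
      have hT : Eᵀ = Matrix.single j i (1 : F) := by
        rw [hE, stdBasisMatrix_transpose']
      have h1 : (E * D) i l = D j l := by
        rw [hE, Matrix.single_mul_apply_same, one_mul]
      have h2 : (D * Eᵀ) i l = 0 := by
        rw [hT]
        exact Matrix.mul_single_apply_of_ne (c := 1) j i i l hl D
      have h3 : (E * D * Eᵀ) i l = 0 := by
        rw [hT]
        exact Matrix.mul_single_apply_of_ne (c := 1) j i i l hl (E * D)
      simp only [Matrix.add_apply, Matrix.zero_apply, h1, h2, h3, add_zero] at hent
      exact hent
    have hrow : ∀ a b : Fin m, 2 ≤ (a : ℕ) → D a b = 0 := by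
      intro a b ha
      by_cases hb : b = e0
      · subst hb
        refine key e1 a ?_ e0 he01
        rw [Fin.lt_def]; simp [he1]; omega
      · refine key e0 a ?_ b hb
        rw [Fin.lt_def]; simp [he0]; omega
    have hcol : ∀ a b : Fin m, 2 ≤ (b : ℕ) → D a b = 0 := by
      intro a b hb
      rw [hanti b a, hrow b a hb, neg_zero]
    refine ⟨D e0 e1, ?_⟩
    have hD10 : D e1 e0 = -D e0 e1 := hanti e0 e1
    have tri : ∀ c : Fin m, c = e0 ∨ c = e1 ∨ 2 ≤ (c : ℕ) := by
      intro c
      rcases Nat.lt_or_ge (c : ℕ) 2 with h | h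
      · rcases Nat.lt_or_ge (c : ℕ) 1 with h1 | h1
        · left; simp [he0, Fin.ext_iff]; omega
        · right; left; simp [he1, Fin.ext_iff]; omega
      · right; right; exact h
    ext a b
    rcases tri a with rfl | rfl | ha
    · rcases tri b with rfl | rfl | hb
      · simp [hD0, Matrix.smul_apply, Matrix.sub_apply, he01, Ne.symm he01]
      · simp [Matrix.smul_apply, Matrix.sub_apply, he01, Ne.symm he01]
      · have hb0 : b ≠ e0 := by simp [he0, Fin.ext_iff]; omega
        have hb1 : b ≠ e1 := by simp [he1, Fin.ext_iff]; omega
        simp [hcol _ _ hb, Matrix.smul_apply, Matrix.sub_apply, Ne.symm hb0, Ne.symm hb1]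
    · rcases tri b with rfl | rfl | hb
      · simp [hD10, Matrix.smul_apply, Matrix.sub_apply, he01, Ne.symm he01]
      · simp [hD0, Matrix.smul_apply, Matrix.sub_apply, he01, Ne.symm he01]
      · have hb0 : b ≠ e0 := by simp [he0, Fin.ext_iff]; omega
        have hb1 : b ≠ e1 := by simp [he1, Fin.ext_iff]; omega
        simp [hcol _ _ hb, Matrix.smul_apply, Matrix.sub_apply, Ne.symm hb0, Ne.symm hb1]
    · have ha0 : a ≠ e0 := by simp [he0, Fin.ext_iff]; omega
      have ha1 : a ≠ e1 := by simp [he1, Fin.ext_iff]; omega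
      simp [hrow _ _ ha, Matrix.smul_apply, Matrix.sub_apply, Ne.symm ha0, Ne.symm ha1]
  · rintro ⟨x, rfl⟩ A ⟨hAd, hAl⟩
    have hA0 : ∀ k : Fin m, A k e0 = if k = e0 then 1 else 0 := by
      intro k
      by_cases hk : k = e0
      · subst hk; simp [hAd]
      · rw [if_neg hk]
        apply hAl
        rw [Fin.lt_def]; simp [he0]
        rcases Nat.eq_zero_or_pos (k : ℕ) with h | h
        · exact absurd (Fin.ext h : k = e0) hk
        · exact h
    have key : A * (Matrix.single e0 e1 (1 : F) -
        Matrix.single e1 e0 (1 : F)) * Aᵀ =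
        Matrix.single e0 e1 (1 : F) - Matrix.single e1 e0 (1 : F) := by
      ext k l
      have expand : (A * (Matrix.single e0 e1 (1 : F) -
          Matrix.single e1 e0 (1 : F)) * Aᵀ) k l
          = A k e0 * A l e1 - A k e1 * A l e0 := by
        rw [Matrix.mul_sub, Matrix.sub_mul, Matrix.sub_apply, mul_std_mul, mul_std_mul]
        simp [Matrix.transpose_apply]
      rw [expand]
      rcases eq_or_ne k e0 with rfl | hk0
      · rcases eq_or_ne l e0 with rfl | hl0
        · simp [hA0, hAd, Matrix.single, Matrix.of_apply, he01, Ne.symm he01]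
        · rcases eq_or_ne l e1 with rfl | hl1
          · simp [hA0, hAd, Matrix.single, Matrix.of_apply, he01, Ne.symm he01]
          · have hl : A l e1 = 0 := by
              apply hAl
              rw [Fin.lt_def]; simp [he1]
              have h0 : (l : ℕ) ≠ 0 := fun h => hl0 (Fin.ext h)
              have h1 : (l : ℕ) ≠ 1 := fun h => hl1 (Fin.ext h)
              omega
            simp [hA0, hl, hl0, Ne.symm hl0, Ne.symm hl1, he01, Ne.symm he01,
              Matrix.single, Matrix.of_apply]
      · rcases eq_or_ne k e1 with rfl | hk1
        · rcases eq_or_ne l e0 with rfl | hl0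
          · simp [hA0, hAd, Matrix.single, Matrix.of_apply, he01, Ne.symm he01]
          · simp [hA0, hAd, hl0, Ne.symm hl0, he01, Ne.symm he01,
              Matrix.single, Matrix.of_apply]
        · have hk : A k e1 = 0 := by
            apply hAl
            rw [Fin.lt_def]; simp [he1]
            have h0 : (k : ℕ) ≠ 0 := fun h => hk0 (Fin.ext h)
            have h1 : (k : ℕ) ≠ 1 := fun h => hk1 (Fin.ext h)
            omega
          simp [hA0, hk0, hk, Ne.symm hk0, Ne.symm hk1,
            Matrix.single, Matrix.of_apply]
    calc A * (x • (Matrix.single e0 e1 (1 : F) -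
            Matrix.single e1 e0 (1 : F))) * Aᵀ
        = x • (A * (Matrix.single e0 e1 (1 : F) -
            Matrix.single e1 e0 (1 : F)) * Aᵀ) := by
          rw [Matrix.mul_smul, Matrix.smul_mul]
      _ = _ := by rw [key]
end

section
/- Let p be a prime, r a positive integer, F a finite field with p^r elements, and m > 2. Let Q(m,F) be the group of 2m×2m block matrices [[A, A·B],[0, (Aᵀ)⁻¹]] with A ∈ Up_m(F) and B an alternating m×m matrix over F (Bᵀ = −B with zero diagonal), a subgroup of GL_{2m}(F). Then the center of Q(m,F) is exactly the set of block matrices [[I_m, D],[0, I_m]] with D = x·(E_{1,2} − E_{2,1}) for x ∈ F, and this center is isomorphic to the additive group of F (hence to (ℤ/pℤ)^r). -/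
open Matrix

section Aux

variable {n : ℕ} {F : Type} [Field F]

lemma aux_mmm (M N : Matrix (Fin n) (Fin n) F) (k l i j : Fin n) :
    (M * Matrix.single k l (1:F) * N) i j = M i k * N l j := by
  simp [Matrix.mul_apply, Matrix.single, Finset.sum_mul, mul_ite, ite_mul, ite_and,
    Finset.sum_ite_eq, Finset.sum_ite_eq']

lemma aux_lm (B : Matrix (Fin n) (Fin n) F) (k l i j : Fin n) :
    (Matrix.single k l (1:F) * B) i j = if i = k then B l j else 0 := by
  simp [Matrix.mul_apply, Matrix.single, ite_mul, ite_and, Finset.sum_ite_eq,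
    Finset.sum_ite_eq', eq_comm]

lemma aux_rm (B : Matrix (Fin n) (Fin n) F) (k l i j : Fin n) :
    (B * Matrix.single k l (1:F)) i j = if j = l then B i k else 0 := by
  simp [Matrix.mul_apply, Matrix.single, mul_ite, ite_and, Finset.sum_ite_eq,
    Finset.sum_ite_eq', eq_comm]

lemma aux_std_transpose (k l : Fin n) (c : F) :
    (Matrix.single k l c)ᵀ = Matrix.single l k c := by
  ext i j
  simp [Matrix.single, and_comm]

lemma aux_det {A : Matrix (Fin n) (Fin n) F} (hA : IsUnitriangular A) : A.det = 1 := by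
  rw [Matrix.det_of_upperTriangular (fun i j h => hA.2 i j h)]
  simp [hA.1]

lemma aux_detu {A : Matrix (Fin n) (Fin n) F} (hA : IsUnitriangular A) : IsUnit A.det := by
  rw [aux_det hA]; exact isUnit_one

lemma aux_detT {A : Matrix (Fin n) (Fin n) F} (hA : IsUnitriangular A) : IsUnit (Aᵀ).det := by
  rw [Matrix.det_transpose, aux_det hA]; exact isUnit_one

lemma aux_one_tri : IsUnitriangular (1 : Matrix (Fin n) (Fin n) F) :=
  ⟨fun i => Matrix.one_apply_eq i, fun i j h => Matrix.one_apply_ne (ne_of_gt h)⟩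

lemma aux_elem_tri {k l : Fin n} (hkl : (k:ℕ) < (l:ℕ)) :
    IsUnitriangular (1 + Matrix.single k l (1:F)) := by
  constructor
  · intro i
    rw [Matrix.add_apply, Matrix.one_apply_eq,
      Matrix.single_apply_of_ne _ _ _ _ _ (by rintro ⟨rfl, rfl⟩; omega)]
    ring
  · intro i j hji
    rw [Matrix.add_apply, Matrix.one_apply_ne (ne_of_gt hji),
      Matrix.single_apply_of_ne _ _ _ _ _ (by
        rintro ⟨rfl, rfl⟩
        exact absurd hji (by simpa using hkl.le.not_gt))]
    ring

/-- key invariance: a unitriangular matrix preserves `J = E₀₁ - E₁₀`. -/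
lemma aux_AJA (hn : 2 < n) {A : Matrix (Fin n) (Fin n) F} (hA : IsUnitriangular A) :
    A * (Matrix.single (⟨0, by omega⟩ : Fin n) (⟨1, by omega⟩ : Fin n) (1:F) -
        Matrix.single (⟨1, by omega⟩ : Fin n) (⟨0, by omega⟩ : Fin n) (1:F)) * Aᵀ =
      Matrix.single (⟨0, by omega⟩ : Fin n) (⟨1, by omega⟩ : Fin n) (1:F) -
        Matrix.single (⟨1, by omega⟩ : Fin n) (⟨0, by omega⟩ : Fin n) (1:F) := by
  set e0 : Fin n := ⟨0, by omega⟩ with he0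
  set e1 : Fin n := ⟨1, by omega⟩ with he1
  have hv0 : (e0 : ℕ) = 0 := rfl
  have hv1 : (e1 : ℕ) = 1 := rfl
  have hc0 : ∀ i : Fin n, A i e0 = if i = e0 then 1 else 0 := by
    intro i
    split
    · next h => rw [h]; exact hA.1 e0
    · next h =>
      refine hA.2 i e0 ?_
      have : (i : ℕ) ≠ 0 := fun hc => h (Fin.ext (by omega))
      rw [Fin.lt_def, hv0]; omega
  have hc1 : ∀ i : Fin n, A i e1 = if i = e1 then 1 else if i = e0 then A e0 e1 else 0 := by
    intro i
    split
    · next h => rw [h]; exact hA.1 e1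
    · next h =>
      split
      · next h' => rw [h']
      · next h' =>
        refine hA.2 i e1 ?_
        have h1 : (i : ℕ) ≠ 1 := fun hc => h (Fin.ext (by omega))
        have h2 : (i : ℕ) ≠ 0 := fun hc => h' (Fin.ext (by omega))
        rw [Fin.lt_def, hv1]; omega
  have hstd : ∀ (a b i j : Fin n), Matrix.single a b (1:F) i j =
      (if i = a then (1:F) else 0) * (if j = b then 1 else 0) := by
    intro a b i j
    by_cases h1 : i = a <;> by_cases h2 : j = b <;>
      simp [Matrix.single, h1, h2] <;>
        simp [eq_comm (a := a) (b := i), eq_comm (a := b) (b := j), h1, h2]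
  ext i j
  rw [Matrix.mul_sub, Matrix.sub_mul, Matrix.sub_apply, aux_mmm, aux_mmm,
    Matrix.transpose_apply, Matrix.transpose_apply, Matrix.sub_apply, hstd, hstd,
    hc0 i, hc0 j, hc1 i, hc1 j]
  clear hc0 hc1
  split_ifs <;> simp_all [Fin.ext_iff] <;> ring

lemma aux_mk_ne {a b : ℕ} (ha : a < n) (hb : b < n) (hab : a ≠ b) :
    (⟨a, ha⟩ : Fin n) ≠ ⟨b, hb⟩ := by
  simp only [ne_eq, Fin.mk.injEq]; exact hab

lemma aux_A_eq_one (hn : 2 < n) {A : Matrix (Fin n) (Fin n) F} (hA : IsUnitriangular A)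
    (h : ∀ k l : Fin n, k ≠ l →
      A * (Matrix.single k l (1:F) - Matrix.single l k 1) * Aᵀ =
        Matrix.single k l (1:F) - Matrix.single l k 1) :
    A = 1 := by
  have hE : ∀ k l : Fin n, k ≠ l → ∀ i j : Fin n,
      A i k * A j l - A i l * A j k =
        Matrix.single k l (1:F) i j - Matrix.single l k (1:F) i j := by
    intro k l hkl i j
    have h2 := congrFun (congrFun (h k l hkl) i) j
    rwa [Matrix.mul_sub, Matrix.sub_mul, Matrix.sub_apply, aux_mmm, aux_mmm,
      Matrix.transpose_apply, Matrix.transpose_apply, Matrix.sub_apply] at h2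
  have claim1 : ∀ k : Fin n, (k:ℕ) + 1 < n → ∀ i, i ≠ k → A i k = 0 := by
    intro k hk i hik
    have hkl : k ≠ (⟨(k:ℕ)+1, hk⟩ : Fin n) :=
      Fin.ne_of_val_ne (by exact Nat.ne_of_lt (Nat.lt_succ_self _))
    have h2 := hE k ⟨(k:ℕ)+1, hk⟩ hkl i ⟨(k:ℕ)+1, hk⟩
    rw [hA.1, hA.2 ⟨(k:ℕ)+1, hk⟩ k (Fin.lt_def.mpr (Nat.lt_succ_self _)),
      Matrix.single_apply_of_ne _ _ _ _ _ (fun hc => hik hc.1.symm),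
      Matrix.single_apply_of_ne _ _ _ _ _ (fun hc => hkl hc.2)] at h2
    simpa using h2
  have lastcol : ∀ i : Fin n, i ≠ ⟨n-1, by omega⟩ → A i ⟨n-1, by omega⟩ = 0 := by
    intro i hi
    have step : ∀ k' : Fin n, (k':ℕ) + 1 < n → k' ≠ ⟨n-1, by omega⟩ → k' ≠ i →
        A i ⟨n-1, by omega⟩ = 0 := by
      intro k' h1 h2 h3
      have h4 := hE k' ⟨n-1, by omega⟩ h2 k' i
      rw [hA.1, claim1 k' h1 i (fun hc => h3 hc.symm),
        Matrix.single_apply_of_ne _ _ _ _ _ (fun hc => hi hc.2.symm),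
        Matrix.single_apply_of_ne _ _ _ _ _ (fun hc => h2 hc.1.symm)] at h4
      simpa using h4
    by_cases hi0 : i = (⟨0, by omega⟩ : Fin n)
    · refine step ⟨1, by omega⟩ (show (1:ℕ)+1 < n by omega)
        (aux_mk_ne _ _ (show (1:ℕ) ≠ n-1 by omega)) ?_
      rw [hi0]; exact aux_mk_ne _ _ (show (1:ℕ) ≠ 0 by omega)
    · exact step ⟨0, by omega⟩ (show (0:ℕ)+1 < n by omega)
        (aux_mk_ne _ _ (show (0:ℕ) ≠ n-1 by omega)) (fun hc => hi0 (by rw [hc]))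
  ext i j
  by_cases hij : i = j
  · rw [hij, hA.1, Matrix.one_apply_eq]
  · rw [Matrix.one_apply_ne hij]
    by_cases hj : (j:ℕ) + 1 < n
    · exact claim1 j hj i hij
    · have hjw : j = (⟨n-1, by omega⟩ : Fin n) := by
        have := j.isLt; exact Fin.ext (show (j:ℕ) = n - 1 by omega)
      rw [hjw] at hij ⊢
      exact lastcol i hij

lemma aux_B_eq (hn : 2 < n) {B : Matrix (Fin n) (Fin n) F} (hBt : Bᵀ = -B)
    (hBd : ∀ i, B i i = 0)
    (h : ∀ k l : Fin n, (k:ℕ) < (l:ℕ) →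
      B = (1 + Matrix.single k l (1:F)) * B * (1 + Matrix.single l k 1)) :
    B = B ⟨0, by omega⟩ ⟨1, by omega⟩ •
      (Matrix.single (⟨0, by omega⟩ : Fin n) (⟨1, by omega⟩ : Fin n) (1:F) -
        Matrix.single (⟨1, by omega⟩ : Fin n) (⟨0, by omega⟩ : Fin n) (1:F)) := by
  have hBneg : ∀ i j : Fin n, B j i = - B i j := by
    intro i j
    have h2 := congrFun (congrFun hBt i) j
    rwa [Matrix.transpose_apply, Matrix.neg_apply] at h2
  have hrow : ∀ i : Fin n, 1 < (i:ℕ) → ∀ j, B i j = 0 := by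
    intro i hi j
    have core : ∀ k' : Fin n, (k':ℕ) < (i:ℕ) → j ≠ k' → B i j = 0 := by
      intro k' hk' hjk'
      have h2 := congrFun (congrFun (h k' i hk') k') j
      simp only [Matrix.mul_add, Matrix.add_mul, Matrix.one_mul, Matrix.mul_one,
        Matrix.add_apply, aux_lm, aux_rm, if_pos rfl, if_neg hjk'] at h2
      simpa using h2
    by_cases hj0 : j = (⟨0, by omega⟩ : Fin n)
    · refine core ⟨1, by omega⟩ (show (1:ℕ) < (i:ℕ) by omega) ?_
      rw [hj0]; exact aux_mk_ne _ _ (by omega)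
    · exact core ⟨0, by omega⟩ (show (0:ℕ) < (i:ℕ) by omega) (fun hc => hj0 (by rw [hc]))
  have h01 : ((⟨0, by omega⟩ : Fin n)) ≠ (⟨1, by omega⟩ : Fin n) := aux_mk_ne _ _ (by omega)
  ext i j
  rw [Matrix.smul_apply, Matrix.sub_apply, smul_eq_mul]
  by_cases hi : 1 < (i:ℕ)
  · rw [hrow i hi j,
      Matrix.single_apply_of_ne _ _ _ _ _
        (fun hc => by rw [← hc.1] at hi; simp at hi),
      Matrix.single_apply_of_ne _ _ _ _ _
        (fun hc => by rw [← hc.1] at hi; simp at hi)]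
    ring
  · by_cases hj : 1 < (j:ℕ)
    · rw [hBneg j i, hrow j hj i,
        Matrix.single_apply_of_ne _ _ _ _ _
          (fun hc => by rw [← hc.2] at hj; simp at hj),
        Matrix.single_apply_of_ne _ _ _ _ _
          (fun hc => by rw [← hc.2] at hj; simp at hj)]
      ring
    · have hii : i = (⟨0, by omega⟩ : Fin n) ∨ i = (⟨1, by omega⟩ : Fin n) := by
        rcases Nat.lt_or_ge (i:ℕ) 1 with h' | h'
        · exact Or.inl (Fin.ext (show (i:ℕ) = 0 by omega))
        · exact Or.inr (Fin.ext (show (i:ℕ) = 1 by omega))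
      have hjj : j = (⟨0, by omega⟩ : Fin n) ∨ j = (⟨1, by omega⟩ : Fin n) := by
        rcases Nat.lt_or_ge (j:ℕ) 1 with h' | h'
        · exact Or.inl (Fin.ext (show (j:ℕ) = 0 by omega))
        · exact Or.inr (Fin.ext (show (j:ℕ) = 1 by omega))
      rcases hii with hii | hii <;> rcases hjj with hjj | hjj <;> rw [hii, hjj]
      · rw [hBd, Matrix.single_apply_of_ne _ _ _ _ _ (fun hc => h01 hc.2.symm),
          Matrix.single_apply_of_ne _ _ _ _ _ (fun hc => h01 hc.1.symm)]
        ring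
      · rw [Matrix.single_apply_same,
          Matrix.single_apply_of_ne _ _ _ _ _ (fun hc => h01 hc.1.symm)]
        ring
      · rw [hBneg ⟨0, by omega⟩ ⟨1, by omega⟩,
          Matrix.single_apply_of_ne _ _ _ _ _ (fun hc => h01 hc.1),
          Matrix.single_apply_same]
        ring
      · rw [hBd, Matrix.single_apply_of_ne _ _ _ _ _ (fun hc => h01 hc.1),
          Matrix.single_apply_of_ne _ _ _ _ _ (fun hc => h01 hc.2)]
        ring

/-- the matrix `J = E₀₁ - E₁₀`. -/
def Jmat (hn : 2 < n) : Matrix (Fin n) (Fin n) F :=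
  Matrix.single (⟨0, by omega⟩ : Fin n) (⟨1, by omega⟩ : Fin n) (1:F) -
    Matrix.single (⟨1, by omega⟩ : Fin n) (⟨0, by omega⟩ : Fin n) (1:F)

lemma Jmat_trans (hn : 2 < n) : (Jmat hn : Matrix (Fin n) (Fin n) F)ᵀ = -Jmat hn := by
  unfold Jmat
  rw [Matrix.transpose_sub, aux_std_transpose, aux_std_transpose, neg_sub]

lemma Jmat_diag (hn : 2 < n) : ∀ i, (Jmat hn : Matrix (Fin n) (Fin n) F) i i = 0 := by
  intro i
  have h01 : ((⟨0, by omega⟩ : Fin n)) ≠ (⟨1, by omega⟩ : Fin n) :=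
    aux_mk_ne _ _ (by omega)
  unfold Jmat
  rw [Matrix.sub_apply,
    Matrix.single_apply_of_ne _ _ _ _ _ (fun hc => h01 (hc.1.trans hc.2.symm)),
    Matrix.single_apply_of_ne _ _ _ _ _ (fun hc => h01 (hc.2.trans hc.1.symm))]
  ring

lemma Jmat_01 (hn : 2 < n) :
    (Jmat hn : Matrix (Fin n) (Fin n) F) ⟨0, by omega⟩ ⟨1, by omega⟩ = 1 := by
  have h01 : ((⟨0, by omega⟩ : Fin n)) ≠ (⟨1, by omega⟩ : Fin n) :=
    aux_mk_ne _ _ (by omega)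
  unfold Jmat
  rw [Matrix.sub_apply, Matrix.single_apply_same,
    Matrix.single_apply_of_ne _ _ _ _ _ (fun hc => h01 hc.1.symm)]
  ring

lemma aux_AJA' (hn : 2 < n) {A : Matrix (Fin n) (Fin n) F} (hA : IsUnitriangular A) :
    A * Jmat hn * Aᵀ = Jmat hn := aux_AJA hn hA

lemma aux_B_eq' (hn : 2 < n) {B : Matrix (Fin n) (Fin n) F} (hBt : Bᵀ = -B)
    (hBd : ∀ i, B i i = 0)
    (h : ∀ k l : Fin n, (k:ℕ) < (l:ℕ) →
      B = (1 + Matrix.single k l (1:F)) * B * (1 + Matrix.single l k 1)) :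
    B = B ⟨0, by omega⟩ ⟨1, by omega⟩ • Jmat hn := aux_B_eq hn hBt hBd h

lemma aux_smul_J_alt (hn : 2 < n) (x : F) :
    (x • Jmat hn : Matrix (Fin n) (Fin n) F)ᵀ = -(x • Jmat hn) := by
  rw [Matrix.transpose_smul, Jmat_trans, smul_neg]

lemma aux_smul_J_diag (hn : 2 < n) (x : F) :
    ∀ i, (x • Jmat hn : Matrix (Fin n) (Fin n) F) i i = 0 := by
  intro i; rw [Matrix.smul_apply, Jmat_diag hn i, smul_zero]

noncomputable def mkQ (A B : Matrix (Fin n) (Fin n) F)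
    (hA : IsUnitriangular A) : GL (Fin n ⊕ Fin n) F where
  val := fromBlocks A (A * B) 0 (Aᵀ)⁻¹
  inv := fromBlocks A⁻¹ (-(B * Aᵀ)) 0 Aᵀ
  val_inv := by
    rw [Matrix.fromBlocks_multiply]
    have h1 : A * A⁻¹ = 1 := Matrix.mul_nonsing_inv A (aux_detu hA)
    have h2 : (Aᵀ)⁻¹ * Aᵀ = 1 := Matrix.nonsing_inv_mul Aᵀ (aux_detT hA)
    simp only [Matrix.mul_neg, Matrix.mul_assoc, Matrix.zero_mul, Matrix.mul_zero, h1, h2,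
      add_zero, zero_add, neg_add_cancel, neg_zero, Matrix.fromBlocks_one]
  inv_val := by
    rw [Matrix.fromBlocks_multiply]
    have h1 : A⁻¹ * A = 1 := Matrix.nonsing_inv_mul A (aux_detu hA)
    have h2 : Aᵀ * (Aᵀ)⁻¹ = 1 := Matrix.mul_nonsing_inv Aᵀ (aux_detT hA)
    have h3 : A⁻¹ * (A * B) = B := by rw [← Matrix.mul_assoc, h1, Matrix.one_mul]
    have h4 : B * (Aᵀ * (Aᵀ)⁻¹) = B := by rw [h2, Matrix.mul_one]
    simp only [Matrix.neg_mul, Matrix.mul_neg, Matrix.mul_assoc, Matrix.zero_mul,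
      Matrix.mul_zero, h1, h2, h3, h4, Matrix.mul_one, add_zero, zero_add, add_neg_cancel,
      neg_zero, Matrix.fromBlocks_one]

lemma mkQ_val (A B : Matrix (Fin n) (Fin n) F) (hA : IsUnitriangular A) :
    (mkQ A B hA : Matrix (Fin n ⊕ Fin n) (Fin n ⊕ Fin n) F) =
      fromBlocks A (A * B) 0 (Aᵀ)⁻¹ := rfl

noncomputable def zmat (hn : 2 < n) (x : F) : GL (Fin n ⊕ Fin n) F :=
  mkQ 1 (x • Jmat hn) aux_one_tri

lemma zmat_val (hn : 2 < n) (x : F) :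
    (zmat hn x : Matrix (Fin n ⊕ Fin n) (Fin n ⊕ Fin n) F) =
      fromBlocks 1 (x • Jmat hn) 0 1 := by
  show fromBlocks 1 (1 * (x • Jmat hn)) 0 (((1 : Matrix (Fin n) (Fin n) F))ᵀ)⁻¹ = _
  rw [Matrix.one_mul, Matrix.transpose_one, inv_one]

end Aux

/-- For `m > 2`, the center of the group `Q(m,F)` of block matrices
`[[A, A·B],[0, (Aᵀ)⁻¹]]` with `A` unitriangular and `B` alternating consists exactly
of the block matrices `[[I, x • (E_{1,2} - E_{2,1})],[0, I]]`, and is isomorphic to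
the additive group of `F`. -/
theorem center_orthogonal_sylow (p r m : ℕ) (hp : p.Prime) (hr : 0 < r) (hm : 2 < m)
    (F : Type) [Field F] [Fintype F] (hF : Fintype.card F = p ^ r)
    (Q : Subgroup (GL (Fin m ⊕ Fin m) F))
    (hQ : ∀ M : GL (Fin m ⊕ Fin m) F, M ∈ Q ↔
      ∃ A B : Matrix (Fin m) (Fin m) F,
        IsUnitriangular A ∧ Bᵀ = -B ∧ (∀ i, B i i = 0) ∧
        (M : Matrix (Fin m ⊕ Fin m) (Fin m ⊕ Fin m) F) =
          Matrix.fromBlocks A (A * B) 0 (Aᵀ)⁻¹) :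
    ((fun M : GL (Fin m ⊕ Fin m) F =>
        (M : Matrix (Fin m ⊕ Fin m) (Fin m ⊕ Fin m) F)) ''
        {M : GL (Fin m ⊕ Fin m) F | M ∈ Q ∧ ∀ N ∈ Q, M * N = N * M} =
      {X : Matrix (Fin m ⊕ Fin m) (Fin m ⊕ Fin m) F | ∃ x : F,
        X = Matrix.fromBlocks 1
          (x • (Matrix.single (⟨0, by omega⟩ : Fin m) (⟨1, by omega⟩ : Fin m) (1 : F) -
                Matrix.single (⟨1, by omega⟩ : Fin m) (⟨0, by omega⟩ : Fin m) (1 : F)))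
          0 1}) ∧
    Nonempty (↥(Subgroup.center ↥Q) ≃* Multiplicative F) := by
  have hJ : (Jmat hm : Matrix (Fin m) (Fin m) F) =
      Matrix.single (⟨0, by omega⟩ : Fin m) (⟨1, by omega⟩ : Fin m) (1 : F) -
        Matrix.single (⟨1, by omega⟩ : Fin m) (⟨0, by omega⟩ : Fin m) (1 : F) := rfl
  -- membership of the candidate central elements
  have hz_mem : ∀ x : F, zmat hm x ∈ Q := fun x =>
    (hQ _).mpr ⟨1, x • Jmat hm, aux_one_tri, aux_smul_J_alt hm x, aux_smul_J_diag hm x, rfl⟩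
  -- the candidate central elements commute with everything in Q
  have hz_comm : ∀ x : F, ∀ N ∈ Q, zmat hm x * N = N * zmat hm x := by
    intro x N hN
    obtain ⟨A', B', hA', hB't, hB'd, hNval⟩ := (hQ N).mp hN
    have hATinv : (x • Jmat hm) * (A'ᵀ)⁻¹ = A' * (x • Jmat hm) := by
      have h1 : A' * (x • Jmat hm) * A'ᵀ = x • Jmat hm := by
        rw [mul_smul_comm, smul_mul_assoc, aux_AJA' hm hA']
      calc (x • Jmat hm) * (A'ᵀ)⁻¹ = A' * (x • Jmat hm) * A'ᵀ * (A'ᵀ)⁻¹ := by rw [h1]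
        _ = A' * (x • Jmat hm) * (A'ᵀ * (A'ᵀ)⁻¹) := by rw [Matrix.mul_assoc]
        _ = A' * (x • Jmat hm) := by
            rw [Matrix.mul_nonsing_inv _ (aux_detT hA'), Matrix.mul_one]
    apply Units.ext
    rw [Units.val_mul, Units.val_mul, zmat_val, hNval, Matrix.fromBlocks_multiply,
      Matrix.fromBlocks_multiply]
    simp only [Matrix.one_mul, Matrix.mul_one, Matrix.zero_mul, Matrix.mul_zero,
      add_zero, zero_add]
    rw [hATinv, add_comm]
  -- the set equality
  have hset : ((fun M : GL (Fin m ⊕ Fin m) F =>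
        (M : Matrix (Fin m ⊕ Fin m) (Fin m ⊕ Fin m) F)) ''
        {M : GL (Fin m ⊕ Fin m) F | M ∈ Q ∧ ∀ N ∈ Q, M * N = N * M} =
      {X : Matrix (Fin m ⊕ Fin m) (Fin m ⊕ Fin m) F | ∃ x : F,
        X = Matrix.fromBlocks 1
          (x • (Matrix.single (⟨0, by omega⟩ : Fin m) (⟨1, by omega⟩ : Fin m) (1 : F) -
                Matrix.single (⟨1, by omega⟩ : Fin m) (⟨0, by omega⟩ : Fin m) (1 : F)))
          0 1}) := by
    ext X
    constructor
    · rintro ⟨M, ⟨hMQ, hMc⟩, rfl⟩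
      obtain ⟨A, B, hA, hBt, hBd, hM⟩ := (hQ M).mp hMQ
      have hTR : ∀ N, N ∈ Q → ∀ A' B' : Matrix (Fin m) (Fin m) F, IsUnitriangular A' →
          (N : Matrix (Fin m ⊕ Fin m) (Fin m ⊕ Fin m) F) = fromBlocks A' (A' * B') 0 (A'ᵀ)⁻¹ →
          A * (A' * B') + (A * B) * (A'ᵀ)⁻¹ = A' * (A * B) + (A' * B') * (Aᵀ)⁻¹ := by
        intro N hN A' B' hA' hNval
        have h2 := congrArg
          (fun u : GL (Fin m ⊕ Fin m) F =>
            Matrix.toBlocks₁₂ (u : Matrix (Fin m ⊕ Fin m) (Fin m ⊕ Fin m) F)) (hMc N hN)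
        simp only [Units.val_mul, hM, hNval, Matrix.fromBlocks_multiply,
          Matrix.toBlocks_fromBlocks₁₂] at h2
        simpa using h2
      -- Step 1 : A = 1
      have hAB' : ∀ B' : Matrix (Fin m) (Fin m) F, B'ᵀ = -B' → (∀ i, B' i i = 0) →
          A * B' * Aᵀ = B' := by
        intro B' h1 h2
        have hN : mkQ 1 B' aux_one_tri ∈ Q := (hQ _).mpr ⟨1, B', aux_one_tri, h1, h2, rfl⟩
        have h3 := hTR _ hN 1 B' aux_one_tri rfl
        rw [Matrix.one_mul, Matrix.one_mul, Matrix.transpose_one, inv_one,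
          Matrix.mul_one] at h3
        have h4 : A * B' = B' * (Aᵀ)⁻¹ := by
          rw [add_comm (A * B') (A * B)] at h3
          exact add_left_cancel h3
        rw [h4, Matrix.mul_assoc, Matrix.nonsing_inv_mul _ (aux_detT hA), Matrix.mul_one]
      have hA1 : A = 1 := by
        refine aux_A_eq_one hm hA (fun k l hkl => hAB' _ ?_ ?_)
        · rw [Matrix.transpose_sub, aux_std_transpose, aux_std_transpose, neg_sub]
        · intro i
          rw [Matrix.sub_apply,
            Matrix.single_apply_of_ne _ _ _ _ _ (fun hc => hkl (hc.1.trans hc.2.symm)),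
            Matrix.single_apply_of_ne _ _ _ _ _ (fun hc => hkl (hc.2.trans hc.1.symm))]
          ring
      subst hA1
      -- Step 2 : B = x • J
      have hB : ∀ k l : Fin m, (k:ℕ) < (l:ℕ) →
          B = (1 + Matrix.single k l (1:F)) * B * (1 + Matrix.single l k 1) := by
        intro k l hkl
        have htri := aux_elem_tri (F := F) hkl
        have hN : mkQ (1 + Matrix.single k l (1:F)) 0 htri ∈ Q :=
          (hQ _).mpr ⟨_, 0, htri, by simp, by simp, rfl⟩
        have h3 := hTR _ hN _ 0 htri rfl
        simp only [Matrix.mul_zero, Matrix.zero_mul, Matrix.one_mul, Matrix.mul_one,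
          add_zero, zero_add, Matrix.transpose_one, inv_one] at h3
        have hTrans : (1 + Matrix.single k l (1:F))ᵀ = 1 + Matrix.single l k 1 := by
          rw [Matrix.transpose_add, Matrix.transpose_one, aux_std_transpose]
        calc B = B * (((1 + Matrix.single k l (1:F))ᵀ)⁻¹ * (1 + Matrix.single k l (1:F))ᵀ) := by
              rw [Matrix.nonsing_inv_mul _ (aux_detT htri), Matrix.mul_one]
          _ = B * ((1 + Matrix.single k l (1:F))ᵀ)⁻¹ * (1 + Matrix.single k l (1:F))ᵀ := by
              rw [Matrix.mul_assoc]
          _ = (1 + Matrix.single k l (1:F)) * B * (1 + Matrix.single l k 1) := by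
              rw [h3, hTrans]
      have hBx := aux_B_eq' hm hBt hBd hB
      refine ⟨B ⟨0, by omega⟩ ⟨1, by omega⟩, ?_⟩
      show (M : Matrix (Fin m ⊕ Fin m) (Fin m ⊕ Fin m) F) = _
      rw [hM, ← hJ, Matrix.one_mul, Matrix.transpose_one, inv_one, ← hBx]
    · rintro ⟨x, rfl⟩
      refine ⟨zmat hm x, ⟨hz_mem x, hz_comm x⟩, ?_⟩
      show (zmat hm x : Matrix (Fin m ⊕ Fin m) (Fin m ⊕ Fin m) F) = _
      rw [zmat_val, hJ]
  refine ⟨hset, ?_⟩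
  -- the group isomorphism
  have hmem_center : ∀ u : ↥Q, u ∈ Subgroup.center ↥Q ↔
      (∀ N ∈ Q, (u : GL (Fin m ⊕ Fin m) F) * N = N * (u : GL (Fin m ⊕ Fin m) F)) := by
    intro u
    rw [Subgroup.mem_center_iff]
    constructor
    · intro hc N hN
      have h2 := congrArg Subtype.val (hc ⟨N, hN⟩)
      simpa using h2.symm
    · intro hc g
      apply Subtype.ext
      simpa using (hc g g.2).symm
  refine ⟨(MulEquiv.ofBijective (MonoidHom.mk'
    (fun x : Multiplicative F =>
      (⟨⟨zmat hm x.toAdd, hz_mem _⟩,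
        (hmem_center _).mpr (fun N hN => hz_comm _ N hN)⟩ : Subgroup.center ↥Q))
    ?_) ⟨?_, ?_⟩).symm⟩
  · -- map_mul
    intro a b
    apply Subtype.ext
    apply Subtype.ext
    apply Units.ext
    show (zmat hm (a * b).toAdd : Matrix (Fin m ⊕ Fin m) (Fin m ⊕ Fin m) F) =
      (zmat hm a.toAdd : Matrix (Fin m ⊕ Fin m) (Fin m ⊕ Fin m) F) *
        (zmat hm b.toAdd : Matrix (Fin m ⊕ Fin m) (Fin m ⊕ Fin m) F)
    rw [zmat_val, zmat_val, zmat_val, Matrix.fromBlocks_multiply]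
    simp only [Matrix.one_mul, Matrix.mul_one, Matrix.zero_mul, Matrix.mul_zero,
      add_zero, zero_add]
    have hab : (a * b).toAdd = a.toAdd + b.toAdd := rfl
    rw [hab, add_smul, add_comm]
  · -- injective
    intro a b hab
    have h2 : (zmat hm a.toAdd : Matrix (Fin m ⊕ Fin m) (Fin m ⊕ Fin m) F) =
        (zmat hm b.toAdd : Matrix (Fin m ⊕ Fin m) (Fin m ⊕ Fin m) F) :=
      congrArg (fun z : Subgroup.center ↥Q =>
        (((z : ↥Q) : GL (Fin m ⊕ Fin m) F) : Matrix (Fin m ⊕ Fin m) (Fin m ⊕ Fin m) F)) hab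
    rw [zmat_val, zmat_val] at h2
    have h3 := congrFun (congrFun h2 (Sum.inl ⟨0, by omega⟩)) (Sum.inr ⟨1, by omega⟩)
    rw [Matrix.fromBlocks_apply₁₂, Matrix.fromBlocks_apply₁₂, Matrix.smul_apply,
      Matrix.smul_apply, Jmat_01 hm, smul_eq_mul, smul_eq_mul, mul_one, mul_one] at h3
    exact Multiplicative.toAdd.injective h3
  · -- surjective
    intro z
    have hu : ((z : ↥Q) : GL (Fin m ⊕ Fin m) F) ∈ Q := (z : ↥Q).2
    have hc : ∀ N ∈ Q, ((z : ↥Q) : GL (Fin m ⊕ Fin m) F) * N =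
        N * ((z : ↥Q) : GL (Fin m ⊕ Fin m) F) := (hmem_center _).mp z.2
    have himg : (((z : ↥Q) : GL (Fin m ⊕ Fin m) F) : Matrix _ _ F) ∈
        {X : Matrix (Fin m ⊕ Fin m) (Fin m ⊕ Fin m) F | ∃ x : F,
          X = Matrix.fromBlocks 1
            (x • (Matrix.single (⟨0, by omega⟩ : Fin m) (⟨1, by omega⟩ : Fin m) (1 : F) -
                  Matrix.single (⟨1, by omega⟩ : Fin m) (⟨0, by omega⟩ : Fin m) (1 : F)))
            0 1} := by
      rw [← hset]
      exact ⟨_, ⟨hu, hc⟩, rfl⟩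
    obtain ⟨x, hx⟩ := himg
    have hz : ((z : ↥Q) : GL (Fin m ⊕ Fin m) F) = zmat hm x := by
      apply Units.ext
      rw [zmat_val, hJ]
      exact hx
    exact ⟨Multiplicative.ofAdd x, Subtype.ext (Subtype.ext hz.symm)⟩
end
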